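/- Let p and q be distinct primes and set ξ = log q / log p (a positive irrational real number). If (a,b) ∈ 𝒰(ξ), then the following are equivalent: (i) p^a/q^b has no non-trivial biased factorization; (ii) (a,b) is irreducible with respect to ξ; (iii) (a,b) ∈ 𝒢 ∩ 𝒰₂(ξ). Similarly, if (a,b) ∈ ℒ(ξ), then the following are equivalent: (i) p^a/q^b has no non-trivial biased factorization; (ii) (a,b) is irreducible with respect to ξ; (iii) (a,b) ∈ 𝒢 ∩ ℒ₁(ξ). -/

import Mathlib

open Real Finset

/-- `𝒩` is encoded by pairs `x : ℕ × ℕ` with `x ≠ (0,0)`.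
The upper set `𝒰(ξ) = {(a,b) ∈ 𝒩 : a > bξ}`. -/
def Uset (ξ : ℝ) : Set (ℕ × ℕ) := {x | x ≠ (0, 0) ∧ (x.2 : ℝ) * ξ < (x.1 : ℝ)}

/-- The lower set `ℒ(ξ) = {(a,b) ∈ 𝒩 : a < bξ}`. -/
def Lset (ξ : ℝ) : Set (ℕ × ℕ) := {x | x ≠ (0, 0) ∧ (x.1 : ℝ) < (x.2 : ℝ) * ξ}

/-- `𝒢 = {(a,b) ∈ 𝒩 : gcd(a,b) = 1}`. -/
def Gset : Set (ℕ × ℕ) := {x | x ≠ (0, 0) ∧ Nat.Coprime x.1 x.2}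

/-- `𝒰₁(ξ)`: elements `(a,b)` of `𝒰(ξ)` with `a/b ≤ m/n` (by cross multiplication)
for every `(m,n) ∈ 𝒰(ξ)` with `m ≤ a`. -/
def U1 (ξ : ℝ) : Set (ℕ × ℕ) :=
  {x | x ∈ Uset ξ ∧ ∀ y ∈ Uset ξ, y.1 ≤ x.1 → x.1 * y.2 ≤ y.1 * x.2}

/-- `𝒰₂(ξ)`: elements `(a,b)` of `𝒰(ξ)` with `a/b ≤ m/n` for every `(m,n) ∈ 𝒰(ξ)`
with `n ≤ b`. -/
def U2 (ξ : ℝ) : Set (ℕ × ℕ) :=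
  {x | x ∈ Uset ξ ∧ ∀ y ∈ Uset ξ, y.2 ≤ x.2 → x.1 * y.2 ≤ y.1 * x.2}

/-- `ℒ₁(ξ)`: elements `(a,b)` of `ℒ(ξ)` with `a/b ≥ m/n` for every `(m,n) ∈ ℒ(ξ)`
with `m ≤ a`. -/
def L1 (ξ : ℝ) : Set (ℕ × ℕ) :=
  {x | x ∈ Lset ξ ∧ ∀ y ∈ Lset ξ, y.1 ≤ x.1 → y.1 * x.2 ≤ x.1 * y.2}

/-- `ℒ₂(ξ)`: elements `(a,b)` of `ℒ(ξ)` with `a/b ≥ m/n` for every `(m,n) ∈ ℒ(ξ)`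
with `n ≤ b`. -/
def L2 (ξ : ℝ) : Set (ℕ × ℕ) :=
  {x | x ∈ Lset ξ ∧ ∀ y ∈ Lset ξ, y.2 ≤ x.2 → y.1 * x.2 ≤ x.1 * y.2}

/-- `(a,b)` is an upper or lower best approximation for `ξ`. -/
def BestApprox (ξ : ℝ) (x : ℕ × ℕ) : Prop :=
  x ∈ Gset ∩ U1 ξ ∨ x ∈ Gset ∩ L2 ξ

/-- A factorization of a positive rational `α ≠ 1`: a tuple of fractions `r n / s n` of
positive integers, none equal to `1`, with `gcd (r m) (s n) = 1` for all `m, n`, whose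
product is `α`. -/
def IsFactorization (α : ℚ) {N : ℕ} (r s : Fin N → ℕ) : Prop :=
  (∀ n, 0 < r n) ∧ (∀ n, 0 < s n) ∧ (∀ n, (r n : ℚ) / (s n : ℚ) ≠ 1) ∧
    (∀ m n, Nat.Coprime (r m) (s n)) ∧ (∏ n, (r n : ℚ) / (s n : ℚ)) = α

/-- The measure function `f_A(t) = (Σₙ m(rₙ/sₙ)^t)^{1/t}` of a factorization, where
`m(rₙ/sₙ) = log max(rₙ, sₙ)`. -/
noncomputable def fmeas {N : ℕ} (r s : Fin N → ℕ) (t : ℝ) : ℝ :=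
  (∑ n, (Real.log ((max (r n) (s n) : ℕ) : ℝ)) ^ t) ^ (1 / t)

/-- A point of `𝒩` is reducible with respect to `ξ` if it is the sum of two points of
`𝒰(ξ)` or the sum of two points of `ℒ(ξ)`. -/
def IsReducible (ξ : ℝ) (x : ℕ × ℕ) : Prop :=
  ∃ y z : ℕ × ℕ, x = y + z ∧
    ((y ∈ Uset ξ ∧ z ∈ Uset ξ) ∨ (y ∈ Lset ξ ∧ z ∈ Lset ξ))

/-- A factorization is biased if all numerators exceed the denominators or vice versa. -/
def Biased {N : ℕ} (r s : Fin N → ℕ) : Prop :=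
  (∀ n, s n < r n) ∨ (∀ n, r n < s n)

/-- `α` has no non-trivial biased factorization. -/
def NoNontrivialBiased (α : ℚ) : Prop :=
  ¬ ∃ (N : ℕ) (r s : Fin N → ℕ), 2 ≤ N ∧ IsFactorization α r s ∧ Biased r s

/-- Lemma `TotalBias`: for `(a,b) ∈ 𝒰(ξ)` the conditions (no non-trivial
biased factorization of `p^a/q^b`), (irreducibility of `(a,b)`), and
`(a,b) ∈ 𝒢 ∩ 𝒰₂(ξ)` are equivalent; similarly for `(a,b) ∈ ℒ(ξ)` with `𝒢 ∩ ℒ₁(ξ)`. -/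

lemma pq_pow_eq {p q : ℕ} (hp : p.Prime) (hq : q.Prime) (hpq : p ≠ q)
    {m n : ℕ} (h : p ^ m = q ^ n) : m = 0 ∧ n = 0 := by
  constructor
  · by_contra hm
    exact hpq ((Nat.prime_dvd_prime_iff_eq hp hq).mp
      (hp.dvd_of_dvd_pow (h ▸ dvd_pow_self p hm)))
  · by_contra hn
    exact hpq (((Nat.prime_dvd_prime_iff_eq hq hp).mp
      (hq.dvd_of_dvd_pow (h.symm ▸ dvd_pow_self q hn))).symm)

lemma bridge {p q : ℕ} (hp : p.Prime) (hq : q.Prime) {ξ : ℝ}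
    (hξ : ξ = Real.log q / Real.log p) (m n : ℕ) :
    ((n : ℝ) * ξ < (m : ℝ)) ↔ q ^ n < p ^ m := by
  have hp1 : (1:ℝ) < p := by exact_mod_cast hp.one_lt
  have hq1 : (1:ℝ) < q := by exact_mod_cast hq.one_lt
  have hlp : 0 < Real.log p := Real.log_pos hp1
  rw [hξ, ← mul_div_assoc, div_lt_iff₀ hlp]
  rw [show (n:ℝ) * Real.log q = Real.log ((q:ℝ) ^ n) by rw [Real.log_pow],
      show (m:ℝ) * Real.log p = Real.log ((p:ℝ) ^ m) by rw [Real.log_pow],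
      Real.log_lt_log_iff (by positivity) (by positivity)]
  constructor
  · intro h; exact_mod_cast h
  · intro h; exact_mod_cast h

lemma irr_aux {p q : ℕ} (hp : p.Prime) (hq : q.Prime) (hpq : p ≠ q) {ξ : ℝ}
    (hξ : ξ = Real.log q / Real.log p) (m n : ℕ) (h : (m:ℝ) = (n:ℝ) * ξ) :
    m = 0 ∧ n = 0 := by
  have hp1 : (1:ℝ) < p := by exact_mod_cast hp.one_lt
  have hq1 : (1:ℝ) < q := by exact_mod_cast hq.one_lt
  have hlp : 0 < Real.log p := Real.log_pos hp1
  rw [hξ, ← mul_div_assoc, eq_div_iff hlp.ne'] at h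
  have hlog : Real.log ((p:ℝ) ^ m) = Real.log ((q:ℝ) ^ n) := by
    rw [Real.log_pow, Real.log_pow]; linarith
  have hpow : (p:ℝ) ^ m = (q:ℝ) ^ n :=
    Real.log_injOn_pos (Set.mem_Ioi.mpr (by positivity))
      (Set.mem_Ioi.mpr (by positivity)) hlog
  exact pq_pow_eq hp hq hpq (by exact_mod_cast hpow)

lemma xi_pos {p q : ℕ} (hp : p.Prime) (hq : q.Prime) {ξ : ℝ}
    (hξ : ξ = Real.log q / Real.log p) : 0 < ξ := by
  rw [hξ]
  exact div_pos (Real.log_pos (by exact_mod_cast hq.one_lt))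
    (Real.log_pos (by exact_mod_cast hp.one_lt))

lemma bridge' {p q : ℕ} (hp : p.Prime) (hq : q.Prime) {ξ : ℝ}
    (hξ : ξ = Real.log q / Real.log p) (m n : ℕ) :
    ((m : ℝ) < (n : ℝ) * ξ) ↔ p ^ m < q ^ n := by
  have hp1 : (1:ℝ) < p := by exact_mod_cast hp.one_lt
  have hq1 : (1:ℝ) < q := by exact_mod_cast hq.one_lt
  have hlp : 0 < Real.log p := Real.log_pos hp1
  rw [hξ, ← mul_div_assoc, lt_div_iff₀ hlp]
  rw [show (n:ℝ) * Real.log q = Real.log ((q:ℝ) ^ n) by rw [Real.log_pow],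
      show (m:ℝ) * Real.log p = Real.log ((p:ℝ) ^ m) by rw [Real.log_pow],
      Real.log_lt_log_iff (by positivity) (by positivity)]
  constructor
  · intro h; exact_mod_cast h
  · intro h; exact_mod_cast h

-- aux for the easy direction (U case): a mediant-type contradiction
lemma aux_U {ξ : ℝ} {a b : ℕ} (hcop : Nat.Coprime a b)
    (hU2 : ∀ y ∈ Uset ξ, y.2 ≤ b → a * y.2 ≤ y.1 * b)
    {y z : ℕ × ℕ} (hy : y ∈ Uset ξ) (hz : z ∈ Uset ξ)
    (hsum : (a, b) = y + z) (hle : y.1 * z.2 ≤ z.1 * y.2) : False := by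
  obtain ⟨hy0, hyU⟩ := hy
  obtain ⟨hz0, hzU⟩ := hz
  have ha : a = y.1 + z.1 := congrArg Prod.fst hsum
  have hb : b = y.2 + z.2 := congrArg Prod.snd hsum
  have hy2b : y.2 ≤ b := by omega
  have h1 : y.1 * b ≤ a * y.2 := by
    calc y.1 * b = y.1 * y.2 + y.1 * z.2 := by rw [hb]; ring
    _ ≤ y.1 * y.2 + z.1 * y.2 := by omega
    _ = a * y.2 := by rw [ha]; ring
  have h2 : a * y.2 ≤ y.1 * b := hU2 y ⟨hy0, hyU⟩ hy2b
  have heq : a * y.2 = y.1 * b := le_antisymm h2 h1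
  rcases Nat.eq_zero_or_pos b with hb0 | hbpos
  · -- b = 0 : then y.2 = z.2 = 0, a = 1, but y.1, z.1 ≥ 1
    have hy2 : y.2 = 0 := by omega
    have hz2 : z.2 = 0 := by omega
    have ha1 : a = 1 := by
      have := hcop; rw [hb0] at this; simpa [Nat.Coprime] using this
    have hy1 : 0 < y.1 := by
      by_contra h
      have : y.1 = 0 := by omega
      exact hy0 (Prod.ext this hy2)
    have hz1 : 0 < z.1 := by
      by_contra h
      have : z.1 = 0 := by omega
      exact hz0 (Prod.ext (by omega) hz2)
    omega
  · have hdvd : b ∣ y.2 := by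
      have : b ∣ a * y.2 := ⟨y.1, by rw [heq]; ring⟩
      exact (Nat.Coprime.dvd_of_dvd_mul_left (Nat.Coprime.symm hcop) this)
    rcases Nat.eq_zero_or_pos y.2 with hy20 | hy2pos
    · -- y.2 = 0 ⇒ y.1 * b = 0 ⇒ y.1 = 0 ⇒ y = 0
      have h0 : y.1 * b = 0 := by rw [← heq, hy20, Nat.mul_zero]
      have : y.1 = 0 := by
        rcases Nat.mul_eq_zero.mp h0 with h | h
        · exact h
        · omega
      exact hy0 (Prod.ext this hy20)
    · have hy2b' : y.2 = b := Nat.le_antisymm hy2b (Nat.le_of_dvd hy2pos hdvd)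
      have hz2 : z.2 = 0 := by omega
      have hy1 : y.1 = a := by
        rw [hy2b'] at heq
        exact (Nat.eq_of_mul_eq_mul_right hbpos heq).symm
      have hz1 : z.1 = 0 := by omega
      exact hz0 (Prod.ext hz1 hz2)

lemma aux_L {ξ : ℝ} {a b : ℕ} (hcop : Nat.Coprime a b)
    (hL1 : ∀ y ∈ Lset ξ, y.1 ≤ a → y.1 * b ≤ a * y.2)
    {y z : ℕ × ℕ} (hy : y ∈ Lset ξ) (hz : z ∈ Lset ξ)
    (hsum : (a, b) = y + z) (hle : y.1 * z.2 ≤ z.1 * y.2) : False := by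
  obtain ⟨hy0, hyL⟩ := hy
  obtain ⟨hz0, hzL⟩ := hz
  have ha : a = y.1 + z.1 := congrArg Prod.fst hsum
  have hb : b = y.2 + z.2 := congrArg Prod.snd hsum
  have hz1a : z.1 ≤ a := by omega
  have h1 : a * z.2 ≤ z.1 * b := by
    calc a * z.2 = y.1 * z.2 + z.1 * z.2 := by rw [ha]; ring
    _ ≤ z.1 * y.2 + z.1 * z.2 := by omega
    _ = z.1 * b := by rw [hb]; ring
  have h2 : z.1 * b ≤ a * z.2 := hL1 z ⟨hz0, hzL⟩ hz1a
  have heq : z.1 * b = a * z.2 := le_antisymm h2 h1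
  rcases Nat.eq_zero_or_pos a with ha0 | hapos
  · -- a = 0 : coprime 0 b ⇒ b = 1, y.1 = z.1 = 0, y.2 + z.2 = 1
    have hb1 : b = 1 := by
      have := hcop; rw [ha0] at this; simpa [Nat.Coprime] using this
    have hy2 : 0 < y.2 := by
      by_contra h
      exact hy0 (Prod.ext (by omega) (by omega))
    have hz2 : 0 < z.2 := by
      by_contra h
      exact hz0 (Prod.ext (by omega) (by omega))
    omega
  · have hdvd : a ∣ z.1 := by
      have : a ∣ z.1 * b := ⟨z.2, heq⟩
      exact (Nat.Coprime.dvd_of_dvd_mul_right hcop this)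
    rcases Nat.eq_zero_or_pos z.1 with hz10 | hz1pos
    · have h0 : a * z.2 = 0 := by rw [← heq, hz10, Nat.zero_mul]
      have : z.2 = 0 := by
        rcases Nat.mul_eq_zero.mp h0 with h | h
        · omega
        · exact h
      exact hz0 (Prod.ext hz10 this)
    · have hz1a' : z.1 = a := Nat.le_antisymm hz1a (Nat.le_of_dvd hz1pos hdvd)
      have hy1 : y.1 = 0 := by omega
      have hz2 : z.2 = b := by
        rw [hz1a'] at heq
        exact (Nat.eq_of_mul_eq_mul_left hapos heq).symm
      have hy2 : y.2 = 0 := by omega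
      exact hy0 (Prod.ext hy1 hy2)

lemma smul_mem_U {ξ : ℝ} {x : ℕ × ℕ} (hx : x ∈ Uset ξ) {c : ℕ} (hc : 0 < c) :
    ((c * x.1, c * x.2) : ℕ × ℕ) ∈ Uset ξ := by
  obtain ⟨hx0, hxU⟩ := hx
  constructor
  · intro h
    apply hx0
    have h1 : c * x.1 = 0 := congrArg Prod.fst h
    have h2 : c * x.2 = 0 := congrArg Prod.snd h
    exact Prod.ext (by rcases Nat.mul_eq_zero.mp h1 with h|h <;> omega)
      (by rcases Nat.mul_eq_zero.mp h2 with h|h <;> omega)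
  · show ((c * x.2 : ℕ) : ℝ) * ξ < ((c * x.1 : ℕ) : ℝ)
    push_cast
    have hcR : (0:ℝ) < c := by exact_mod_cast hc
    nlinarith

lemma unsmul_mem_U {ξ : ℝ} {m n c : ℕ} (hc : 0 < c)
    (hx : ((c * m, c * n) : ℕ × ℕ) ∈ Uset ξ) : ((m, n) : ℕ × ℕ) ∈ Uset ξ := by
  obtain ⟨hx0, hxU⟩ := hx
  have hcR : (0:ℝ) < c := by exact_mod_cast hc
  constructor
  · intro h
    apply hx0
    have h1 : m = 0 := congrArg Prod.fst h
    have h2 : n = 0 := congrArg Prod.snd h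
    simp [h1, h2]
  · show (n : ℝ) * ξ < (m : ℝ)
    have : ((c * n : ℕ) : ℝ) * ξ < ((c * m : ℕ) : ℝ) := hxU
    push_cast at this
    nlinarith

lemma smul_mem_L {ξ : ℝ} {x : ℕ × ℕ} (hx : x ∈ Lset ξ) {c : ℕ} (hc : 0 < c) :
    ((c * x.1, c * x.2) : ℕ × ℕ) ∈ Lset ξ := by
  obtain ⟨hx0, hxL⟩ := hx
  constructor
  · intro h
    apply hx0
    have h1 : c * x.1 = 0 := congrArg Prod.fst h
    have h2 : c * x.2 = 0 := congrArg Prod.snd h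
    exact Prod.ext (by rcases Nat.mul_eq_zero.mp h1 with h|h <;> omega)
      (by rcases Nat.mul_eq_zero.mp h2 with h|h <;> omega)
  · show ((c * x.1 : ℕ) : ℝ) < ((c * x.2 : ℕ) : ℝ) * ξ
    push_cast
    have hcR : (0:ℝ) < c := by exact_mod_cast hc
    nlinarith

lemma unsmul_mem_L {ξ : ℝ} {m n c : ℕ} (hc : 0 < c)
    (hx : ((c * m, c * n) : ℕ × ℕ) ∈ Lset ξ) : ((m, n) : ℕ × ℕ) ∈ Lset ξ := by
  obtain ⟨hx0, hxL⟩ := hx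
  have hcR : (0:ℝ) < c := by exact_mod_cast hc
  constructor
  · intro h
    apply hx0
    have h1 : m = 0 := congrArg Prod.fst h
    have h2 : n = 0 := congrArg Prod.snd h
    simp [h1, h2]
  · show (m : ℝ) < (n : ℝ) * ξ
    have : ((c * m : ℕ) : ℝ) < ((c * n : ℕ) : ℝ) * ξ := hxL
    push_cast at this
    nlinarith

/-- If `gcd a b ≥ 2` then `(a,b)` is reducible (given it lies in `U` or `L`). -/
lemma red_of_gcd {ξ : ℝ} {a b : ℕ} (hab0 : (a, b) ≠ ((0, 0) : ℕ × ℕ))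
    (hmem : ((a, b) : ℕ × ℕ) ∈ Uset ξ ∨ ((a, b) : ℕ × ℕ) ∈ Lset ξ)
    (hcop : ¬ Nat.Coprime a b) : IsReducible ξ (a, b) := by
  set g := Nat.gcd a b with hg
  have hg0 : g ≠ 0 := by
    intro h
    exact hab0 (Prod.ext (Nat.eq_zero_of_gcd_eq_zero_left h)
      (Nat.eq_zero_of_gcd_eq_zero_right h))
  have hg2 : 2 ≤ g := by
    rcases Nat.lt_or_ge g 2 with h | h
    · exact absurd (show Nat.Coprime a b by rw [Nat.Coprime, ← hg]; omega) hcop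
    · exact h
  set a' := a / g with ha'
  set b' := b / g with hb'
  have hag : a = g * a' := (Nat.mul_div_cancel' (Nat.gcd_dvd_left a b)).symm
  have hbg : b = g * b' := (Nat.mul_div_cancel' (Nat.gcd_dvd_right a b)).symm
  obtain ⟨k, hk⟩ : ∃ k, g = k + 2 := ⟨g - 2, by omega⟩
  refine ⟨(a', b'), ((k+1) * a', (k+1) * b'), ?_, ?_⟩
  · rw [Prod.mk_add_mk, Prod.mk.injEq]
    exact ⟨by rw [hag, hk]; ring, by rw [hbg, hk]; ring⟩
  · rcases hmem with hU | hL
    · left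
      have hy : ((a', b') : ℕ × ℕ) ∈ Uset ξ := by
        apply unsmul_mem_U (c := g) (by omega)
        rwa [← hag, ← hbg]
      exact ⟨hy, smul_mem_U hy (by omega)⟩
    · right
      have hy : ((a', b') : ℕ × ℕ) ∈ Lset ξ := by
        apply unsmul_mem_L (c := g) (by omega)
        rwa [← hag, ← hbg]
      exact ⟨hy, smul_mem_L hy (by omega)⟩

lemma irred_iff_U {ξ : ℝ} (hξ0 : 0 < ξ)
    (hirr : ∀ m n : ℕ, (m:ℝ) = (n:ℝ) * ξ → m = 0 ∧ n = 0)
    {a b : ℕ} (hab : ((a, b) : ℕ × ℕ) ∈ Uset ξ) :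
    ¬ IsReducible ξ (a, b) ↔ (a, b) ∈ Gset ∩ U2 ξ := by
  classical
  obtain ⟨hab0, habU⟩ := hab
  have habU' : (b : ℝ) * ξ < (a : ℝ) := habU
  constructor
  · intro hnr
    by_cases hcop : Nat.Coprime a b
    swap
    · exact absurd (red_of_gcd hab0 (Or.inl ⟨hab0, habU⟩) hcop) hnr
    refine ⟨⟨hab0, hcop⟩, ⟨hab0, habU⟩, ?_⟩
    intro y hy hyb
    by_contra hlt
    rw [Nat.not_le] at hlt
    have hlt : y.1 * b < a * y.2 := by simpa using hlt
    -- hlt : y.1 * b < a * y.2  (witness violating U2)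
    obtain ⟨hy0, hyU⟩ := hy
    have hn1 : 1 ≤ y.2 := by
      rcases Nat.eq_zero_or_pos y.2 with h | h
      · rw [h] at hlt; omega
      · exact h
    have hm_lt : y.1 < a := by
      have h1 : y.1 * y.2 ≤ y.1 * b := Nat.mul_le_mul_left _ hyb
      have h2 : y.1 * y.2 < a * y.2 := lt_of_le_of_lt h1 hlt
      exact Nat.lt_of_mul_lt_mul_right h2
    -- the finite search space
    set F : Finset (ℕ × ℕ) :=
      (Finset.range (a+1) ×ˢ Finset.range (b+1)).filter (fun x => x ∈ Uset ξ) with hF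
    have memF : ∀ x : ℕ × ℕ, x ∈ F ↔ (x.1 ≤ a ∧ x.2 ≤ b ∧ x ∈ Uset ξ) := by
      intro x
      simp [hF, Finset.mem_filter, Finset.mem_product, Finset.mem_range, Nat.lt_succ_iff,
        and_assoc]
    have habF : ((a, b) : ℕ × ℕ) ∈ F := (memF _).mpr ⟨le_refl _, le_refl _, hab0, habU⟩
    obtain ⟨c, hcF, hmin⟩ := F.exists_min_image (fun x => (x.1 : ℝ) - (x.2 : ℝ) * ξ)
      ⟨(a, b), habF⟩
    obtain ⟨hc1, hc2, hcUm⟩ := (memF c).mp hcF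
    obtain ⟨hc0, hcU⟩ := hcUm
    by_cases hceq : c = ((a, b) : ℕ × ℕ)
    · -- (a,b) minimizes the quality, contradicting the witness
      have hyF : y ∈ F := (memF _).mpr ⟨le_of_lt hm_lt, hyb, hy0, hyU⟩
      have hq : (a : ℝ) - (b : ℝ) * ξ ≤ (y.1 : ℝ) - (y.2 : ℝ) * ξ := by
        have := hmin y hyF
        rwa [hceq] at this
      have hnle : (b - y.2 : ℕ) = b - y.2 := rfl
      have hbn : (y.2 : ℝ) ≤ (b : ℝ) := by exact_mod_cast hyb
      have h3 : (b : ℝ) * ((a : ℝ) - (b : ℝ) * ξ) ≤ (b : ℝ) * ((y.1 : ℝ) - (y.2 : ℝ) * ξ) :=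
        mul_le_mul_of_nonneg_left hq (by positivity)
      have hint : (0:ℝ) ≤ ((b : ℝ) - y.2) * ((a : ℝ) - (b : ℝ) * ξ) :=
        mul_nonneg (by linarith) (by linarith)
      have hreal : (a : ℝ) * y.2 ≤ (y.1 : ℝ) * b := by nlinarith
      have : a * y.2 ≤ y.1 * b := by exact_mod_cast hreal
      omega
    · -- subtract the minimizer: (a,b) = c + ((a,b) - c) is a U-decomposition
      apply hnr
      have hq : (c.1 : ℝ) - (c.2 : ℝ) * ξ ≤ (a : ℝ) - (b : ℝ) * ξ := hmin (a, b) habF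
      have hsub : ((b - c.2 : ℕ) : ℝ) * ξ ≤ ((a - c.1 : ℕ) : ℝ) := by
        rw [Nat.cast_sub hc2, Nat.cast_sub hc1]
        nlinarith
      have hstrict : ((b - c.2 : ℕ) : ℝ) * ξ < ((a - c.1 : ℕ) : ℝ) := by
        rcases lt_or_eq_of_le hsub with h | h
        · exact h
        · exfalso
          obtain ⟨h1, h2⟩ := hirr (a - c.1) (b - c.2) h.symm
          exact hceq (Prod.ext (by omega) (by omega))
      have hzpos : 0 < a - c.1 := by
        by_contra h
        have : a - c.1 = 0 := by omega
        rw [this] at hstrict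
        have : (0:ℝ) ≤ ((b - c.2 : ℕ) : ℝ) * ξ := by positivity
        simp at hstrict
        linarith
      refine ⟨c, (a - c.1, b - c.2), ?_, Or.inl ⟨⟨hc0, hcU⟩, ?_, hstrict⟩⟩
      · rw [show c = (c.1, c.2) from rfl, Prod.mk_add_mk, Prod.mk.injEq]
        exact ⟨by omega, by omega⟩
      · intro h
        have := congrArg Prod.fst h
        simp at this
        omega
  · rintro ⟨⟨_, hcop⟩, _, hU2⟩ ⟨y, z, hsum, hUU | hLL⟩
    · rcases le_total (y.1 * z.2) (z.1 * y.2) with h | h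
      · exact aux_U hcop hU2 hUU.1 hUU.2 hsum h
      · exact aux_U hcop hU2 hUU.2 hUU.1 (by rw [hsum, add_comm]) h
    · obtain ⟨⟨_, hy⟩, ⟨_, hz⟩⟩ := hLL
      have ha : a = y.1 + z.1 := congrArg Prod.fst hsum
      have hb : b = y.2 + z.2 := congrArg Prod.snd hsum
      have : (a : ℝ) < (b : ℝ) * ξ := by
        rw [ha, hb]
        push_cast
        linarith
      linarith

lemma irred_iff_L {ξ : ℝ} (hξ0 : 0 < ξ)
    (hirr : ∀ m n : ℕ, (m:ℝ) = (n:ℝ) * ξ → m = 0 ∧ n = 0)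
    {a b : ℕ} (hab : ((a, b) : ℕ × ℕ) ∈ Lset ξ) :
    ¬ IsReducible ξ (a, b) ↔ (a, b) ∈ Gset ∩ L1 ξ := by
  classical
  obtain ⟨hab0, habL⟩ := hab
  have habL' : (a : ℝ) < (b : ℝ) * ξ := habL
  constructor
  · intro hnr
    by_cases hcop : Nat.Coprime a b
    swap
    · exact absurd (red_of_gcd hab0 (Or.inr ⟨hab0, habL⟩) hcop) hnr
    refine ⟨⟨hab0, hcop⟩, ⟨hab0, habL⟩, ?_⟩
    intro y hy hya
    by_contra hlt
    rw [Nat.not_le] at hlt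
    have hlt : a * y.2 < y.1 * b := by simpa using hlt
    obtain ⟨hy0, hyL⟩ := hy
    have hm1 : 1 ≤ y.1 := by
      rcases Nat.eq_zero_or_pos y.1 with h | h
      · rw [h] at hlt; omega
      · exact h
    have hn_lt : y.2 < b := by
      have h1 : y.1 * y.2 ≤ a * y.2 := Nat.mul_le_mul_right _ hya
      have h2 : y.1 * y.2 < y.1 * b := lt_of_le_of_lt h1 hlt
      exact Nat.lt_of_mul_lt_mul_left h2
    set F : Finset (ℕ × ℕ) :=
      (Finset.range (a+1) ×ˢ Finset.range (b+1)).filter (fun x => x ∈ Lset ξ) with hF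
    have memF : ∀ x : ℕ × ℕ, x ∈ F ↔ (x.1 ≤ a ∧ x.2 ≤ b ∧ x ∈ Lset ξ) := by
      intro x
      simp [hF, Finset.mem_filter, Finset.mem_product, Finset.mem_range, Nat.lt_succ_iff,
        and_assoc]
    have habF : ((a, b) : ℕ × ℕ) ∈ F := (memF _).mpr ⟨le_refl _, le_refl _, hab0, habL⟩
    obtain ⟨c, hcF, hmin⟩ := F.exists_min_image (fun x => (x.2 : ℝ) * ξ - (x.1 : ℝ))
      ⟨(a, b), habF⟩
    obtain ⟨hc1, hc2, hcLm⟩ := (memF c).mp hcF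
    obtain ⟨hc0, hcL⟩ := hcLm
    by_cases hceq : c = ((a, b) : ℕ × ℕ)
    · have hyF : y ∈ F := (memF _).mpr ⟨hya, le_of_lt hn_lt, hy0, hyL⟩
      have hq : (b : ℝ) * ξ - (a : ℝ) ≤ (y.2 : ℝ) * ξ - (y.1 : ℝ) := by
        have := hmin y hyF
        rwa [hceq] at this
      have hma : (y.1 : ℝ) ≤ (a : ℝ) := by exact_mod_cast hya
      have h3 : (a : ℝ) * ((b : ℝ) * ξ - (a : ℝ)) ≤ (a : ℝ) * ((y.2 : ℝ) * ξ - (y.1 : ℝ)) :=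
        mul_le_mul_of_nonneg_left hq (by positivity)
      have hint : (0:ℝ) ≤ ((a : ℝ) - y.1) * ((b : ℝ) * ξ - (a : ℝ)) :=
        mul_nonneg (by linarith) (by linarith)
      have hreal : (y.1 : ℝ) * b ≤ (a : ℝ) * y.2 := by nlinarith [hξ0, h3, hint]
      have : y.1 * b ≤ a * y.2 := by exact_mod_cast hreal
      omega
    · apply hnr
      have hq : (c.2 : ℝ) * ξ - (c.1 : ℝ) ≤ (b : ℝ) * ξ - (a : ℝ) := hmin (a, b) habF
      have hsub : ((a - c.1 : ℕ) : ℝ) ≤ ((b - c.2 : ℕ) : ℝ) * ξ := by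
        rw [Nat.cast_sub hc2, Nat.cast_sub hc1]
        nlinarith
      have hstrict : ((a - c.1 : ℕ) : ℝ) < ((b - c.2 : ℕ) : ℝ) * ξ := by
        rcases lt_or_eq_of_le hsub with h | h
        · exact h
        · exfalso
          obtain ⟨h1, h2⟩ := hirr (a - c.1) (b - c.2) h
          exact hceq (Prod.ext (by omega) (by omega))
      have hzpos : 0 < b - c.2 := by
        by_contra h
        have h0 : b - c.2 = 0 := by omega
        rw [h0] at hstrict
        have : (0:ℝ) ≤ ((a - c.1 : ℕ) : ℝ) := by positivity
        simp at hstrict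
        linarith
      refine ⟨c, (a - c.1, b - c.2), ?_, Or.inr ⟨⟨hc0, hcL⟩, ?_, hstrict⟩⟩
      · rw [show c = (c.1, c.2) from rfl, Prod.mk_add_mk, Prod.mk.injEq]
        exact ⟨by omega, by omega⟩
      · intro h
        have := congrArg Prod.snd h
        simp at this
        omega
  · rintro ⟨⟨_, hcop⟩, _, hL1⟩ ⟨y, z, hsum, hUU | hLL⟩
    · obtain ⟨⟨_, hy⟩, ⟨_, hz⟩⟩ := hUU
      have ha : a = y.1 + z.1 := congrArg Prod.fst hsum
      have hb : b = y.2 + z.2 := congrArg Prod.snd hsum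
      have : (b : ℝ) * ξ < (a : ℝ) := by
        rw [ha, hb]
        push_cast
        linarith
      linarith
    · rcases le_total (y.1 * z.2) (z.1 * y.2) with h | h
      · exact aux_L hcop hL1 hLL.1 hLL.2 hsum h
      · exact aux_L hcop hL1 hLL.2 hLL.1 (by rw [hsum, add_comm]) h

lemma red_to_fact {p q : ℕ} (hp : p.Prime) (hq : q.Prime) (hpq : p ≠ q) {ξ : ℝ}
    (hξ : ξ = Real.log q / Real.log p) {a b : ℕ} (h : IsReducible ξ (a, b)) :
    ∃ (N : ℕ) (r s : Fin N → ℕ), 2 ≤ N ∧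
      IsFactorization ((p : ℚ) ^ a / (q : ℚ) ^ b) r s ∧ Biased r s := by
  obtain ⟨y, z, hsum, hc⟩ := h
  have ha : a = y.1 + z.1 := congrArg Prod.fst hsum
  have hb : b = y.2 + z.2 := congrArg Prod.snd hsum
  have hcpq : Nat.Coprime p q := (Nat.coprime_primes hp hq).mpr hpq
  refine ⟨2, ![p ^ y.1, p ^ z.1], ![q ^ y.2, q ^ z.2], le_refl 2, ?_, ?_⟩
  · refine ⟨?_, ?_, ?_, ?_, ?_⟩
    · intro n; fin_cases n <;> simp <;> exact Nat.pow_pos hp.pos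
    · intro n; fin_cases n <;> simp <;> exact Nat.pow_pos hq.pos
    · have hy' : q ^ y.2 ≠ p ^ y.1 ∧ q ^ z.2 ≠ p ^ z.1 := by
        rcases hc with ⟨h1, h2⟩ | ⟨h1, h2⟩
        · exact ⟨Nat.ne_of_lt ((bridge hp hq hξ _ _).mp h1.2),
            Nat.ne_of_lt ((bridge hp hq hξ _ _).mp h2.2)⟩
        · exact ⟨Nat.ne_of_gt ((bridge' hp hq hξ _ _).mp h1.2),
            Nat.ne_of_gt ((bridge' hp hq hξ _ _).mp h2.2)⟩
      simp only [Fin.forall_fin_two, Matrix.cons_val_zero, Matrix.cons_val_one, Matrix.head_cons]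
      constructor
      · intro hcontra
        rw [div_eq_one_iff_eq (Nat.cast_ne_zero.mpr (pow_pos hq.pos _).ne')] at hcontra
        exact hy'.1 (by exact_mod_cast hcontra.symm)
      · intro hcontra
        rw [div_eq_one_iff_eq (Nat.cast_ne_zero.mpr (pow_pos hq.pos _).ne')] at hcontra
        exact hy'.2 (by exact_mod_cast hcontra.symm)
    · simp only [Fin.forall_fin_two, Matrix.cons_val_zero, Matrix.cons_val_one, Matrix.head_cons]
      exact ⟨⟨hcpq.pow _ _, hcpq.pow _ _⟩, hcpq.pow _ _, hcpq.pow _ _⟩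
    · rw [Fin.prod_univ_two]
      simp only [Matrix.cons_val_zero, Matrix.cons_val_one, Matrix.head_cons]
      rw [div_mul_div_comm]
      push_cast
      rw [← pow_add, ← pow_add, ← ha, ← hb]
  · rcases hc with ⟨h1, h2⟩ | ⟨h1, h2⟩
    · left
      simp only [Fin.forall_fin_two, Matrix.cons_val_zero, Matrix.cons_val_one, Matrix.head_cons]
      exact ⟨(bridge hp hq hξ _ _).mp h1.2, (bridge hp hq hξ _ _).mp h2.2⟩
    · right
      simp only [Fin.forall_fin_two, Matrix.cons_val_zero, Matrix.cons_val_one, Matrix.head_cons]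
      exact ⟨(bridge' hp hq hξ _ _).mp h1.2, (bridge' hp hq hξ _ _).mp h2.2⟩

lemma fact_to_red {p q : ℕ} (hp : p.Prime) (hq : q.Prime) (hpq : p ≠ q) {ξ : ℝ}
    (hξ : ξ = Real.log q / Real.log p) {a b : ℕ}
    (h : ∃ (N : ℕ) (r s : Fin N → ℕ), 2 ≤ N ∧
      IsFactorization ((p : ℚ) ^ a / (q : ℚ) ^ b) r s ∧ Biased r s) :
    IsReducible ξ (a, b) := by
  obtain ⟨N, r, s, hN, ⟨hr0, hs0, hne1, hcop, hprod⟩, hbias⟩ := h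
  have hprod' : ((∏ n, r n : ℕ) : ℚ) / ((∏ n, s n : ℕ) : ℚ) = (p:ℚ)^a/(q:ℚ)^b := by
    rw [← hprod]
    push_cast
    rw [Finset.prod_div_distrib]
  have hsne : ((∏ n, s n : ℕ) : ℚ) ≠ 0 :=
    Nat.cast_ne_zero.mpr (Finset.prod_pos (fun n _ => hs0 n)).ne'
  have hqb : ((q:ℚ)^b) ≠ 0 := by
    have : (0:ℚ) < q := by exact_mod_cast hq.pos
    positivity
  have hE : (∏ n, r n) * q ^ b = p ^ a * (∏ n, s n) := by
    have := (div_eq_div_iff hsne hqb).mp hprod'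
    exact_mod_cast this
  have hcopRS : Nat.Coprime (∏ n, r n) (∏ n, s n) :=
    Nat.Coprime.prod_left (fun m _ => Nat.Coprime.prod_right (fun n _ => hcop m n))
  have hcopPQ : Nat.Coprime (p ^ a) (q ^ b) := ((Nat.coprime_primes hp hq).mpr hpq).pow _ _
  have hdvd1 : (∏ n, r n) ∣ p ^ a :=
    hcopRS.dvd_of_dvd_mul_right (hE ▸ dvd_mul_right (∏ n, r n) (q ^ b))
  have hdvd2 : p ^ a ∣ ∏ n, r n :=
    hcopPQ.dvd_of_dvd_mul_right (hE ▸ dvd_mul_right (p ^ a) (∏ n, s n))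
  have hPr : ∏ n, r n = p ^ a := Nat.dvd_antisymm hdvd1 hdvd2
  have hE2 : (∏ n, s n) * p ^ a = (∏ n, r n) * q ^ b := by
    rw [mul_comm]; exact hE.symm
  have hdvd3 : (∏ n, s n) ∣ q ^ b := by
    apply hcopRS.symm.dvd_of_dvd_mul_left (m := ∏ n, r n)
    have hd : (∏ n, s n) ∣ (∏ n, s n) * p ^ a := dvd_mul_right _ _
    rwa [hE2] at hd
  have hdvd4 : q ^ b ∣ ∏ n, s n := by
    apply hcopPQ.symm.dvd_of_dvd_mul_left (m := p ^ a)
    have hd : q ^ b ∣ (∏ n, r n) * q ^ b := dvd_mul_left _ _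
    rwa [hE] at hd
  have hPs : ∏ n, s n = q ^ b := Nat.dvd_antisymm hdvd3 hdvd4
  choose α hαle hαe using fun n =>
    (Nat.dvd_prime_pow hp).mp (hPr ▸ Finset.dvd_prod_of_mem r (Finset.mem_univ n))
  choose β hβle hβe using fun n =>
    (Nat.dvd_prime_pow hq).mp (hPs ▸ Finset.dvd_prod_of_mem s (Finset.mem_univ n))
  have hsumα : ∑ n, α n = a := by
    have hpp : ∏ n, p ^ α n = p ^ a := by
      rw [← hPr]; exact Finset.prod_congr rfl (fun n _ => (hαe n).symm)
    rw [Finset.prod_pow_eq_pow_sum] at hpp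
    exact Nat.pow_right_injective hp.two_le hpp
  have hsumβ : ∑ n, β n = b := by
    have hpp : ∏ n, q ^ β n = q ^ b := by
      rw [← hPs]; exact Finset.prod_congr rfl (fun n _ => (hβe n).symm)
    rw [Finset.prod_pow_eq_pow_sum] at hpp
    exact Nat.pow_right_injective hq.two_le hpp
  have i0 : Fin N := ⟨0, by omega⟩
  set E : Finset (Fin N) := Finset.univ.erase i0 with hEdef
  have hEne : E.Nonempty := by
    apply Finset.card_pos.mp
    rw [hEdef, Finset.card_erase_of_mem (Finset.mem_univ i0), Finset.card_univ, Fintype.card_fin]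
    omega
  have hsum : ((a, b) : ℕ × ℕ) = (α i0, β i0) + (∑ n ∈ E, α n, ∑ n ∈ E, β n) := by
    rw [Prod.mk_add_mk, Prod.mk.injEq]
    constructor
    · rw [← hsumα, hEdef, Finset.add_sum_erase _ α (Finset.mem_univ i0)]
    · rw [← hsumβ, hEdef, Finset.add_sum_erase _ β (Finset.mem_univ i0)]
  rcases hbias with hbias | hbias
  · -- all s n < r n : upper decomposition
    have hU : ∀ n, ((α n, β n) : ℕ × ℕ) ∈ Uset ξ := by
      intro n
      have hlt : q ^ β n < p ^ α n := by rw [← hαe n, ← hβe n]; exact hbias n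
      refine ⟨?_, (bridge hp hq hξ _ _).mpr hlt⟩
      intro hcontra
      have h1 : α n = 0 := congrArg Prod.fst hcontra
      have h2 : β n = 0 := congrArg Prod.snd hcontra
      have : r n = 1 := by rw [hαe n, h1, pow_zero]
      have hs1 : s n = 1 := by rw [hβe n, h2, pow_zero]
      have := hbias n
      omega
    refine ⟨(α i0, β i0), (∑ n ∈ E, α n, ∑ n ∈ E, β n), hsum, Or.inl ⟨hU i0, ?_, ?_⟩⟩
    · intro hcontra
      have h1 : ∑ n ∈ E, α n = 0 := congrArg Prod.fst hcontra
      have h2 : ∑ n ∈ E, β n = 0 := congrArg Prod.snd hcontra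
      have hlt : ((∑ n ∈ E, β n : ℕ) : ℝ) * ξ < ((∑ n ∈ E, α n : ℕ) : ℝ) := by
        push_cast
        rw [Finset.sum_mul]
        exact Finset.sum_lt_sum_of_nonempty hEne (fun n _ => (hU n).2)
      rw [h1, h2] at hlt
      simp at hlt
    · show ((∑ n ∈ E, β n : ℕ) : ℝ) * ξ < ((∑ n ∈ E, α n : ℕ) : ℝ)
      push_cast
      rw [Finset.sum_mul]
      exact Finset.sum_lt_sum_of_nonempty hEne (fun n _ => (hU n).2)
  · -- all r n < s n : lower decomposition
    have hL : ∀ n, ((α n, β n) : ℕ × ℕ) ∈ Lset ξ := by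
      intro n
      have hlt : p ^ α n < q ^ β n := by rw [← hαe n, ← hβe n]; exact hbias n
      refine ⟨?_, (bridge' hp hq hξ _ _).mpr hlt⟩
      intro hcontra
      have h1 : α n = 0 := congrArg Prod.fst hcontra
      have h2 : β n = 0 := congrArg Prod.snd hcontra
      have : r n = 1 := by rw [hαe n, h1, pow_zero]
      have hs1 : s n = 1 := by rw [hβe n, h2, pow_zero]
      have := hbias n
      omega
    refine ⟨(α i0, β i0), (∑ n ∈ E, α n, ∑ n ∈ E, β n), hsum, Or.inr ⟨hL i0, ?_, ?_⟩⟩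
    · intro hcontra
      have h1 : ∑ n ∈ E, α n = 0 := congrArg Prod.fst hcontra
      have h2 : ∑ n ∈ E, β n = 0 := congrArg Prod.snd hcontra
      have hlt : ((∑ n ∈ E, α n : ℕ) : ℝ) < ((∑ n ∈ E, β n : ℕ) : ℝ) * ξ := by
        push_cast
        rw [Finset.sum_mul]
        exact Finset.sum_lt_sum_of_nonempty hEne (fun n _ => (hL n).2)
      rw [h1, h2] at hlt
      simp at hlt
    · show ((∑ n ∈ E, α n : ℕ) : ℝ) < ((∑ n ∈ E, β n : ℕ) : ℝ) * ξ
      push_cast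
      rw [Finset.sum_mul]
      exact Finset.sum_lt_sum_of_nonempty hEne (fun n _ => (hL n).2)

theorem stmt_14 (p q : ℕ) (hp : p.Prime) (hq : q.Prime) (hpq : p ≠ q)
    (ξ : ℝ) (hξ : ξ = Real.log q / Real.log p) (a b : ℕ) :
    ((a, b) ∈ Uset ξ →
      ((NoNontrivialBiased ((p : ℚ) ^ a / (q : ℚ) ^ b) ↔ ¬ IsReducible ξ (a, b)) ∧
       (¬ IsReducible ξ (a, b) ↔ (a, b) ∈ Gset ∩ U2 ξ))) ∧
    ((a, b) ∈ Lset ξ →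
      ((NoNontrivialBiased ((p : ℚ) ^ a / (q : ℚ) ^ b) ↔ ¬ IsReducible ξ (a, b)) ∧
       (¬ IsReducible ξ (a, b) ↔ (a, b) ∈ Gset ∩ L1 ξ))) := by
  
  have hξ0 : 0 < ξ := xi_pos hp hq hξ
  have hirr : ∀ m n : ℕ, (m:ℝ) = (n:ℝ) * ξ → m = 0 ∧ n = 0 :=
    fun m n h => irr_aux hp hq hpq hξ m n h
  constructor
  · intro hU
    refine ⟨⟨?_, ?_⟩, irred_iff_U hξ0 hirr hU⟩
    · intro hnb hred
      exact hnb (red_to_fact hp hq hpq hξ hred)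
    · intro hnr hfac
      exact hnr (fact_to_red hp hq hpq hξ hfac)
  · intro hL
    refine ⟨⟨?_, ?_⟩, irred_iff_L hξ0 hirr hL⟩
    · intro hnb hred
      exact hnb (red_to_fact hp hq hpq hξ hred)
    · intro hnr hfac
      exact hnr (fact_to_red hp hq hpq hξ hfac)
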